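/- Let n ≤ m be positive integers, q ∈ ℂ, and let R_n = ℂ[X]/(X^n − q), R_m = ℂ[Y]/(Y^m − q). Define the ℂ-linear map j : R_n → R_m on the monomial basis by j(x^c) = y^{c + (m−n)} for 0 ≤ c ≤ n − 1 (where x, y are the images of X, Y). Then for all a, b with 0 ≤ a, b ≤ n − 1 and n ≤ a + b ≤ 2n − 2, one has j(x^a · x^b) = j(x^a) · j(x^b). -/
import Mathlib


open Polynomial

lemma root_pow_eq (k : ℕ) (q : ℂ) :
    (AdjoinRoot.root ((X : ℂ[X]) ^ k - C q)) ^ k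
      = algebraMap ℂ _ q := by
  have h := AdjoinRoot.mk_self (f := (X : ℂ[X]) ^ k - C q)
  rw [map_sub, map_pow, AdjoinRoot.mk_X, sub_eq_zero] at h
  rw [h, AdjoinRoot.mk_C]
  rfl

/-- The stabilization map `j : ℂ[X]/(X^n - q) → ℂ[Y]/(Y^m - q)`, defined on the
monomial basis by `j(x^c) = y^(c + (m - n))`, is multiplicative on products
`x^a * x^b` having a quantum correction (`n ≤ a + b ≤ 2n - 2`). -/
theorem stmt_4 (n m : ℕ) (hn : 1 ≤ n) (hnm : n ≤ m) (q : ℂ)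
    (x : AdjoinRoot ((X : ℂ[X]) ^ n - C q))
    (hx : x = AdjoinRoot.root ((X : ℂ[X]) ^ n - C q))
    (y : AdjoinRoot ((X : ℂ[X]) ^ m - C q))
    (hy : y = AdjoinRoot.root ((X : ℂ[X]) ^ m - C q))
    (j : AdjoinRoot ((X : ℂ[X]) ^ n - C q) →ₗ[ℂ] AdjoinRoot ((X : ℂ[X]) ^ m - C q))
    (hj : ∀ c : ℕ, c ≤ n - 1 → j (x ^ c) = y ^ (c + (m - n)))
    (a b : ℕ) (ha : a ≤ n - 1) (hb : b ≤ n - 1)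
    (hab₁ : n ≤ a + b) (hab₂ : a + b ≤ 2 * n - 2) :
    j (x ^ a * x ^ b) = j (x ^ a) * j (x ^ b) := by
  obtain ⟨c, hc⟩ : ∃ c, a + b = c + n := ⟨a + b - n, by omega⟩
  have hcn : c ≤ n - 1 := by omega
  have hxn : x ^ n = algebraMap ℂ _ q := by rw [hx]; exact root_pow_eq n q
  have hym : y ^ m = algebraMap ℂ _ q := by rw [hy]; exact root_pow_eq m q
  have hL : j (x ^ a * x ^ b) = q • y ^ (c + (m - n)) := by
    rw [← pow_add, hc, pow_add, hxn, mul_comm, ← Algebra.smul_def, map_smul,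
      hj c hcn]
  have hR : j (x ^ a) * j (x ^ b) = q • y ^ (c + (m - n)) := by
    rw [hj a ha, hj b hb, ← pow_add]
    have he : a + (m - n) + (b + (m - n)) = (c + (m - n)) + m := by omega
    rw [he, pow_add, hym, mul_comm, ← Algebra.smul_def]
  rw [hL, hR]
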